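/- arXiv:1809.00566 — 4 statements merged into one kernel-verified Lean document; each statement's English description precedes it below -/
import Mathlib

section
/- For every natural number n ≥ 1, n = Σ_{k=1}^{n} (−μ(2k+1)) · ⌊(n+k+1)/(2k+1)⌋, where μ is the Möbius function. -/
open ArithmeticFunction ArithmeticFunction.Moebius ArithmeticFunction.zeta Finset

lemma sum_mu_divisors (m : ℕ) :
    ∑ d ∈ m.divisors, μ d = if m = 1 then 1 else 0 := by
  calc ∑ d ∈ m.divisors, μ d = (μ * (ζ : ArithmeticFunction ℤ)) m :=
        (coe_mul_zeta_apply).symm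
    _ = (1 : ArithmeticFunction ℤ) m := by rw [moebius_mul_coe_zeta]
    _ = if m = 1 then 1 else 0 := one_apply

lemma card_lem (n k : ℕ) (hk : 1 ≤ k) (hkn : k ≤ n) :
    ((Finset.Icc 0 n).filter (fun j => (2 * k + 1) ∣ (2 * j + 1))).card
      = (n + k + 1) / (2 * k + 1) := by
  have hpos : 0 < 2 * k + 1 := by omega
  have himg : (Finset.Icc 0 n).filter (fun j => (2 * k + 1) ∣ (2 * j + 1))
      = (Finset.range ((n - k) / (2 * k + 1) + 1)).image (fun s => (2 * k + 1) * s + k) := by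
    ext j
    simp only [mem_filter, mem_Icc, mem_image, mem_range]
    constructor
    · rintro ⟨⟨-, hj⟩, t, ht⟩
      rcases Nat.even_or_odd t with ⟨s, hs⟩ | ⟨s, hs⟩
      · exfalso
        have : 2 * j + 1 = 2 * ((2 * k + 1) * s) := by rw [ht, hs]; ring
        omega
      · have key : 2 * j + 1 = 2 * ((2 * k + 1) * s + k) + 1 := by rw [ht, hs]; ring
        refine ⟨s, ?_, by omega⟩
        rw [Nat.lt_succ_iff, Nat.le_div_iff_mul_le hpos]
        have : s * (2 * k + 1) = (2 * k + 1) * s := mul_comm _ _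
        omega
    · rintro ⟨s, hs, rfl⟩
      rw [Nat.lt_succ_iff, Nat.le_div_iff_mul_le hpos] at hs
      have : s * (2 * k + 1) = (2 * k + 1) * s := mul_comm _ _
      exact ⟨⟨by omega, by omega⟩, 2 * s + 1, by ring⟩
  rw [himg, Finset.card_image_of_injective _ (fun a b h => Nat.eq_of_mul_eq_mul_left (by omega) (show (2*k+1)*a = (2*k+1)*b by omega)), Finset.card_range]
  have h2 : n + k + 1 = (n - k) + (2 * k + 1) := by omega
  rw [h2, Nat.add_div_right _ hpos]

open ArithmeticFunction ArithmeticFunction.Moebius in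
theorem stmt_11 (n : ℕ) (hn : 1 ≤ n) :
    (n : ℤ) = ∑ k ∈ Finset.Icc 1 n,
      (-(μ (2 * k + 1))) * (((n + k + 1) / (2 * k + 1) : ℕ) : ℤ) := by
  have step1 : ∀ k ∈ Finset.Icc 1 n,
      (-(μ (2 * k + 1))) * (((n + k + 1) / (2 * k + 1) : ℕ) : ℤ)
        = ∑ j ∈ Finset.Icc 0 n, if (2 * k + 1) ∣ (2 * j + 1) then (-(μ (2 * k + 1)) : ℤ) else 0 := by
    intro k hk
    rw [mem_Icc] at hk
    rw [← card_lem n k hk.1 hk.2, Finset.sum_ite, Finset.sum_const, Finset.sum_const_zero,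
      add_zero, nsmul_eq_mul, mul_comm]
  rw [Finset.sum_congr rfl step1, Finset.sum_comm]
  have step2 : ∀ j ∈ Finset.Icc 0 n,
      (∑ k ∈ Finset.Icc 1 n, if (2 * k + 1) ∣ (2 * j + 1) then (-(μ (2 * k + 1)) : ℤ) else 0)
        = if j = 0 then 0 else 1 := by
    intro j hj
    rw [mem_Icc] at hj
    rw [← Finset.sum_filter]
    have hbij : ∑ k ∈ (Finset.Icc 1 n).filter (fun k => (2 * k + 1) ∣ (2 * j + 1)),
        (-(μ (2 * k + 1)) : ℤ) = ∑ d ∈ (2 * j + 1).divisors.erase 1, (-(μ d) : ℤ) := by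
      apply Finset.sum_nbij' (fun k => 2 * k + 1) (fun d => (d - 1) / 2)
      · intro k hk
        simp only [mem_filter, mem_Icc] at hk
        simp only [Finset.mem_erase, Nat.mem_divisors]
        exact ⟨by omega, hk.2, by omega⟩
      · intro d hd
        simp only [Finset.mem_erase, Nat.mem_divisors] at hd
        obtain ⟨hd1, hdvd, -⟩ := hd
        have hdle : d ≤ 2 * j + 1 := Nat.le_of_dvd (by omega) hdvd
        have hodd : d % 2 = 1 := by
          rcases Nat.even_or_odd d with ⟨c, hc⟩ | ⟨c, hc⟩
          · exfalso
            obtain ⟨t, ht⟩ := hdvd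
            have : 2 * j + 1 = 2 * (c * t) := by rw [ht, hc]; ring
            omega
          · omega
        simp only [mem_filter, mem_Icc]
        refine ⟨⟨by omega, by omega⟩, ?_⟩
        have h2 : 2 * ((d - 1) / 2) + 1 = d := by omega
        rw [h2]; exact hdvd
      · intro k hk; omega
      · intro d hd
        simp only [Finset.mem_erase, Nat.mem_divisors] at hd
        obtain ⟨hd1, hdvd, -⟩ := hd
        have hodd : d % 2 = 1 := by
          rcases Nat.even_or_odd d with ⟨c, hc⟩ | ⟨c, hc⟩
          · exfalso
            obtain ⟨t, ht⟩ := hdvd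
            have : 2 * j + 1 = 2 * (c * t) := by rw [ht, hc]; ring
            omega
          · omega
        omega
      · intro k hk; rfl
    rw [hbij]
    have herase : ∑ d ∈ (2 * j + 1).divisors.erase 1, (-(μ d) : ℤ)
        = (∑ d ∈ (2 * j + 1).divisors, (-(μ d) : ℤ)) - (-(μ 1)) := by
      rw [Finset.sum_erase_eq_sub]
      simp [Nat.mem_divisors]
    rw [herase, Finset.sum_neg_distrib, sum_mu_divisors]
    by_cases h : j = 0 <;> simp [h]
  rw [Finset.sum_congr rfl step2]
  have hsplit : ∑ j ∈ Finset.Icc 0 n, (if j = 0 then (0:ℤ) else 1)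
      = (∑ j ∈ Finset.Icc 0 n, (1:ℤ)) - ∑ j ∈ Finset.Icc 0 n, (if j = 0 then (1:ℤ) else 0) := by
    rw [← Finset.sum_sub_distrib]
    apply Finset.sum_congr rfl
    intro x _
    split <;> ring
  rw [hsplit, Finset.sum_const, Finset.sum_ite_eq' (Finset.Icc 0 n) 0 (fun _ => (1:ℤ))]
  simp [Nat.card_Icc]
end

section
/- For every positive integer n, |Σ_{k=0}^{n} μ(2k+1)/(2k+1)| < 2, where μ is the Möbius function. -/
open ArithmeticFunction ArithmeticFunction.Moebius Finset

private lemma sum_divisors_moebius' (m : ℕ) :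
    ∑ d ∈ m.divisors, (μ d : ℤ) = if m = 1 then 1 else 0 := by
  have h := congrArg (fun f : ArithmeticFunction ℤ => f m) moebius_mul_coe_zeta
  simpa only [coe_mul_zeta_apply, one_apply] using h

private lemma key_identity (n : ℕ) :
    ∑ k ∈ range (n+1), (μ (2*k+1) : ℤ) * (((2*n+1) / (2*k+1) + 1) / 2 : ℕ) = 1 := by
  have L : ∑ k ∈ range (n+1), ∑ d ∈ (2*k+1).divisors, (μ d : ℤ) = 1 := by
    have h1 : ∀ k ∈ range (n+1), ∑ d ∈ (2*k+1).divisors, (μ d : ℤ)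
        = if k = 0 then 1 else 0 := by
      intro k _
      rw [sum_divisors_moebius', if_congr (show (2*k+1 = 1) ↔ (k = 0) by omega) rfl rfl]
    rw [sum_congr rfl h1, sum_ite_eq' (range (n+1)) 0 (fun _ => (1:ℤ))]
    simp
  rw [← L]
  have hrw : ∀ k ∈ range (n+1), (μ (2*k+1) : ℤ) * (((2*n+1) / (2*k+1) + 1) / 2 : ℕ)
      = ∑ _j ∈ range (((2*n+1) / (2*k+1) + 1) / 2), (μ (2*k+1) : ℤ) := by
    intro k _
    simp [Finset.sum_const, nsmul_eq_mul, mul_comm]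
  rw [sum_congr rfl hrw, Finset.sum_sigma', Finset.sum_sigma']
  apply Finset.sum_nbij' (i := fun (p : (_ : ℕ) × ℕ) =>
      (⟨((2*p.1+1)*(2*p.2+1) - 1)/2, 2*p.1+1⟩ : (_ : ℕ) × ℕ))
    (j := fun (p : (_ : ℕ) × ℕ) => (⟨(p.2 - 1)/2, ((2*p.1+1)/p.2 - 1)/2⟩ : (_ : ℕ) × ℕ))
  · -- i maps into divisors-sigma
    rintro ⟨k, j⟩ hp
    simp only [mem_sigma, mem_range] at hp
    obtain ⟨hk, hj⟩ := hp
    have hj' : 2*j+1 ≤ (2*n+1) / (2*k+1) := by omega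
    have hle : (2*k+1) * (2*j+1) ≤ 2*n+1 := by
      rw [mul_comm]; exact (Nat.le_div_iff_mul_le (by omega)).mp hj'
    have hodd : (2*k+1)*(2*j+1) = 2*(2*k*j+k+j) + 1 := by ring
    simp only [mem_sigma, mem_range, Nat.mem_divisors]
    refine ⟨by omega, ?_, by omega⟩
    have h1 : 2 * (((2*k+1)*(2*j+1) - 1)/2) + 1 = (2*k+1)*(2*j+1) := by omega
    rw [h1]
    exact Dvd.intro _ rfl
  · -- j maps into range-sigma
    rintro ⟨k, d⟩ hp
    simp only [mem_sigma, mem_range, Nat.mem_divisors] at hp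
    obtain ⟨hk, hd, -⟩ := hp
    obtain ⟨e, he⟩ := hd
    have hodd : Odd (2*k+1) := ⟨k, by ring⟩
    rw [he] at hodd
    obtain ⟨⟨k', hk'⟩, ⟨j', hj'⟩⟩ := (Nat.odd_mul).mp hodd
    have hdpos : 0 < d := by omega
    have hdle : d ≤ 2*k+1 := Nat.le_of_dvd (by omega) ⟨e, he⟩
    have heq : (2*k+1)/d = e := by rw [he, Nat.mul_div_cancel_left _ hdpos]
    have hc : e ≤ (2*n+1) / d := by
      rw [Nat.le_div_iff_mul_le hdpos, mul_comm, ← he]; omega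
    have hd2 : 2*((d-1)/2)+1 = d := by omega
    simp only [mem_sigma, mem_range]
    refine ⟨by omega, ?_⟩
    rw [heq, hd2]
    omega
  · -- left inverse
    rintro ⟨k, j⟩ hp
    simp only [mem_sigma, mem_range] at hp
    have hodd : (2*k+1)*(2*j+1) = 2*(2*k*j+k+j) + 1 := by ring
    have h1 : 2 * (((2*k+1)*(2*j+1) - 1)/2) + 1 = (2*k+1)*(2*j+1) := by omega
    simp only [Sigma.mk.inj_iff, heq_eq_eq]
    refine ⟨by omega, ?_⟩
    rw [h1, Nat.mul_div_cancel_left _ (show 0 < 2*k+1 by omega)]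
    omega
  · -- right inverse
    rintro ⟨k, d⟩ hp
    simp only [mem_sigma, mem_range, Nat.mem_divisors] at hp
    obtain ⟨hk, hd, -⟩ := hp
    obtain ⟨e, he⟩ := hd
    have hodd : Odd (2*k+1) := ⟨k, by ring⟩
    rw [he] at hodd
    obtain ⟨⟨k', hk'⟩, ⟨j', hj'⟩⟩ := (Nat.odd_mul).mp hodd
    have hdpos : 0 < d := by omega
    have heq : (2*k+1)/d = e := by rw [he, Nat.mul_div_cancel_left _ hdpos]
    simp only [Sigma.mk.inj_iff, heq_eq_eq]
    constructor
    · rw [heq]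
      have h2 : (2*((d-1)/2)+1) * (2*((e-1)/2)+1) = d * e := by
        congr 1 <;> omega
      rw [h2, ← he]
      omega
    · omega
  · -- values agree
    rintro ⟨k, j⟩ _
    rfl

private lemma close_half (n k : ℕ) :
    |(2*(n:ℝ)+1) / (2*(2*(k:ℝ)+1)) - ((((2*n+1) / (2*k+1) + 1) / 2 : ℕ) : ℝ)| ≤ 1/2 := by
  set d := 2*k+1 with hd
  set q := (2*n+1) / d with hq
  set c := (q+1)/2 with hc
  have hd0 : 0 < d := by omega
  have hm := Nat.div_add_mod (2*n+1) d
  rw [← hq] at hm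
  have hr : (2*n+1) % d < d := Nat.mod_lt _ hd0
  have h2 : q ≤ 2*c ∧ 2*c ≤ q+1 := by omega
  have h3 : d*(2*c) ≤ d*(q+1) := Nat.mul_le_mul_left _ h2.2
  have h4 : d*q ≤ d*(2*c) := Nat.mul_le_mul_left _ h2.1
  have h5 : d*(q+1) = d*q + d := by ring
  have hA : d*(2*c) ≤ 2*n+1 + d := by omega
  have hB : 2*n+1 < d*(2*c) + d := by omega
  have hA' : (d:ℝ)*(2*c) ≤ 2*(n:ℝ)+1 + d := by exact_mod_cast hA
  have hB' : (2*(n:ℝ)+1) < (d:ℝ)*(2*c) + d := by exact_mod_cast hB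
  have hd0' : (0:ℝ) < d := by exact_mod_cast hd0
  have hdk : (d:ℝ) = 2*(k:ℝ)+1 := by rw [hd]; push_cast; ring
  have e1 : (2*(n:ℝ)+1)/(2*(2*(k:ℝ)+1)) - (c:ℝ)
      = ((2*(n:ℝ)+1) - (d:ℝ)*(2*c))/(2*(d:ℝ)) := by
    rw [hdk] at *
    field_simp
  rw [e1, abs_div, abs_of_pos (show (0:ℝ) < 2*(d:ℝ) by linarith),
    div_le_iff₀ (show (0:ℝ) < 2*(d:ℝ) by linarith), abs_le]
  constructor <;> linarith

open ArithmeticFunction ArithmeticFunction.Moebius in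
theorem stmt_13 (n : ℕ) (hn : 1 ≤ n) :
    |∑ k ∈ Finset.range (n + 1), (μ (2 * k + 1) : ℝ) / (2 * k + 1)| < 2 := by
  set A := ∑ k ∈ Finset.range (n + 1), (μ (2 * k + 1) : ℝ) / (2 * k + 1) with hA
  have hid : ∑ k ∈ range (n+1),
      (μ (2*k+1) : ℝ) * ((((2*n+1) / (2*k+1) + 1) / 2 : ℕ) : ℝ) = 1 := by
    have h := congrArg (fun z : ℤ => (z : ℝ)) (key_identity n)
    push_cast at h
    exact h
  have e : (2*(n:ℝ)+1)/2 * A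
      - (∑ k ∈ range (n+1), (μ (2*k+1) : ℝ) * ((((2*n+1) / (2*k+1) + 1) / 2 : ℕ) : ℝ))
      = ∑ k ∈ range (n+1), (μ (2*k+1) : ℝ) *
        ((2*(n:ℝ)+1) / (2*(2*(k:ℝ)+1)) - ((((2*n+1) / (2*k+1) + 1) / 2 : ℕ) : ℝ)) := by
    rw [hA, Finset.mul_sum, ← Finset.sum_sub_distrib]
    refine sum_congr rfl fun k _ => ?_
    rw [mul_sub]
    congr 1
    have hk0 : (2*(k:ℝ)+1) ≠ 0 := by positivity
    field_simp
  rw [hid] at e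
  have hbound : |(2*(n:ℝ)+1)/2 * A - 1| ≤ ((n:ℝ)+1)/2 := by
    rw [e]
    refine (Finset.abs_sum_le_sum_abs _ _).trans ?_
    have hterm : ∀ k ∈ range (n+1), |(μ (2*k+1) : ℝ) *
        ((2*(n:ℝ)+1) / (2*(2*(k:ℝ)+1)) - ((((2*n+1) / (2*k+1) + 1) / 2 : ℕ) : ℝ))|
        ≤ 1/2 := by
      intro k _
      rw [abs_mul]
      have hμ : |(μ (2*k+1) : ℝ)| ≤ 1 := by
        have := @ArithmeticFunction.abs_moebius_le_one (2*k+1)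
        exact_mod_cast this
      calc |(μ (2*k+1) : ℝ)| * _ ≤ 1 * (1/2) :=
            mul_le_mul hμ (close_half n k) (abs_nonneg _) zero_le_one
        _ = 1/2 := by ring
    refine (Finset.sum_le_sum hterm).trans ?_
    rw [Finset.sum_const, Finset.card_range, nsmul_eq_mul]
    push_cast
    linarith
  have hXabs : |(2*(n:ℝ)+1)/2 * A| ≤ ((n:ℝ)+3)/2 := by
    have h := abs_add_le ((2*(n:ℝ)+1)/2 * A - 1) 1
    simp only [sub_add_cancel, abs_one] at h
    linarith
  have hN2 : (0:ℝ) < (2*(n:ℝ)+1)/2 := by positivity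
  rw [abs_mul, abs_of_pos hN2] at hXabs
  have hn' : (1:ℝ) ≤ n := by exact_mod_cast hn
  nlinarith [abs_nonneg A]
end

section
/- For all n ≥ 1, −n + 2 ≤ Σ_{k=0}^{n} μ(2k+1)·(n+k+1)/(2k+1) ≤ n. -/
open Finset ArithmeticFunction ArithmeticFunction.Moebius ArithmeticFunction.zeta

private lemma aux_lt_div (n k j : ℕ) :
    j < (n + k + 1) / (2 * k + 1) ↔ (2 * k + 1) * (2 * j + 1) ≤ 2 * n + 1 := by
  rw [Nat.lt_iff_add_one_le, Nat.le_div_iff_mul_le (by omega : 0 < 2 * k + 1)]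
  constructor <;> intro h <;> nlinarith

private lemma aux_count (n k : ℕ) :
    ((Finset.range (2 * n + 2)).filter (fun m => Odd m ∧ (2 * k + 1) ∣ m)).card
      = (n + k + 1) / (2 * k + 1) := by
  have himg : (Finset.range (2 * n + 2)).filter (fun m => Odd m ∧ (2 * k + 1) ∣ m)
      = (Finset.range ((n + k + 1) / (2 * k + 1))).image
          (fun j => (2 * k + 1) * (2 * j + 1)) := by
    ext m
    simp only [Finset.mem_filter, Finset.mem_range, Finset.mem_image]
    constructor
    · rintro ⟨hml, hodd, e, he⟩
      have he' : Odd e := by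
        rcases Nat.even_or_odd e with h | h
        · exact absurd (he ▸ h.mul_left (2 * k + 1)) (Nat.not_even_iff_odd.mpr hodd)
        · exact h
      obtain ⟨j, rfl⟩ := he'
      exact ⟨j, (aux_lt_div n k j).mpr (by omega), he.symm⟩
    · rintro ⟨j, hj, rfl⟩
      have := (aux_lt_div n k j).mp hj
      exact ⟨by omega, ⟨(2 * k + 1) * j + k, by ring⟩, ⟨2 * j + 1, rfl⟩⟩
  rw [himg, Finset.card_image_of_injective _ ?_, Finset.card_range]
  intro a b hab
  have := Nat.eq_of_mul_eq_mul_left (show 0 < 2 * k + 1 by omega) hab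
  omega

private lemma aux_divsum (n m : ℕ) (hm : Odd m) (hle : m ≤ 2 * n + 1) :
    (∑ k ∈ Finset.range (n + 1), if (2 * k + 1) ∣ m then (μ (2 * k + 1) : ℤ) else 0)
      = if m = 1 then 1 else 0 := by
  have hm0 : m ≠ 0 := by rintro rfl; simp [Nat.odd_iff] at hm
  have hstep : (∑ k ∈ Finset.range (n + 1), if (2 * k + 1) ∣ m then (μ (2 * k + 1) : ℤ) else 0)
      = ∑ d ∈ m.divisors, (μ d : ℤ) := by
    rw [← Finset.sum_filter]
    apply Finset.sum_nbij' (fun k => 2 * k + 1) (fun d => d / 2)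
    · intro k hk
      simp only [Finset.mem_filter, Finset.mem_range] at hk
      exact Nat.mem_divisors.mpr ⟨hk.2, hm0⟩
    · intro d hd
      rw [Nat.mem_divisors] at hd
      have hdodd : d % 2 = 1 := by
        rcases Nat.even_or_odd d with h | h
        · exfalso
          have h2 : (2 : ℕ) ∣ m := dvd_trans h.two_dvd hd.1
          rw [Nat.odd_iff] at hm
          omega
        · exact Nat.odd_iff.mp h
      have hdle : d ≤ m := Nat.le_of_dvd (Nat.pos_of_ne_zero hm0) hd.1
      simp only [Finset.mem_filter, Finset.mem_range]
      constructor
      · omega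
      · have : 2 * (d / 2) + 1 = d := by omega
        rw [this]; exact hd.1
    · intro k hk; omega
    · intro d hd
      rw [Nat.mem_divisors] at hd
      have hdodd : d % 2 = 1 := by
        rcases Nat.even_or_odd d with h | h
        · exfalso
          have h2 : (2 : ℕ) ∣ m := dvd_trans h.two_dvd hd.1
          rw [Nat.odd_iff] at hm
          omega
        · exact Nat.odd_iff.mp h
      omega
    · intro k hk; rfl
  rw [hstep]
  have h1 : (∑ d ∈ m.divisors, (μ d : ℤ)) = (μ * (ζ : ArithmeticFunction ℤ)) m := by
    rw [ArithmeticFunction.coe_mul_zeta_apply]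
  rw [h1, ArithmeticFunction.moebius_mul_coe_zeta, ArithmeticFunction.one_apply]

private lemma aux_key (n : ℕ) :
    (∑ k ∈ Finset.range (n + 1),
        (μ (2 * k + 1) : ℤ) * ((n + k + 1) / (2 * k + 1) : ℕ)) = 1 := by
  have h1 : ∀ k ∈ Finset.range (n + 1),
      (μ (2 * k + 1) : ℤ) * ((n + k + 1) / (2 * k + 1) : ℕ)
        = ∑ m ∈ Finset.range (2 * n + 2),
            (if Odd m ∧ (2 * k + 1) ∣ m then (μ (2 * k + 1) : ℤ) else 0) := by
    intro k _
    rw [← Finset.sum_filter, Finset.sum_const, aux_count, nsmul_eq_mul, mul_comm]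
  rw [Finset.sum_congr rfl h1, Finset.sum_comm]
  have h2 : ∀ m ∈ Finset.range (2 * n + 2),
      (∑ k ∈ Finset.range (n + 1),
          if Odd m ∧ (2 * k + 1) ∣ m then (μ (2 * k + 1) : ℤ) else 0)
        = if m = 1 then 1 else 0 := by
    intro m hm
    rw [Finset.mem_range] at hm
    by_cases hodd : Odd m
    · simp only [hodd, true_and]
      exact aux_divsum n m hodd (by omega)
    · simp only [hodd, false_and, if_false, Finset.sum_const_zero]
      rw [if_neg]
      rintro rfl
      exact hodd odd_one
  rw [Finset.sum_congr rfl h2, Finset.sum_ite_eq' (Finset.range (2 * n + 2)) 1 (fun _ => (1 : ℤ))]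
  simp

open ArithmeticFunction ArithmeticFunction.Moebius in
theorem stmt_14 (n : ℕ) (hn : 1 ≤ n) :
    -(n : ℝ) + 2 ≤ ∑ k ∈ Finset.range (n + 1),
        (μ (2 * k + 1) : ℝ) * ((n : ℝ) + k + 1) / (2 * k + 1) ∧
    ∑ k ∈ Finset.range (n + 1),
        (μ (2 * k + 1) : ℝ) * ((n : ℝ) + k + 1) / (2 * k + 1) ≤ (n : ℝ) := by
  set f : ℕ → ℝ := fun k => (μ (2 * k + 1) : ℝ) * ((n : ℝ) + k + 1) / (2 * k + 1) with hf
  set g : ℕ → ℝ := fun k => (μ (2 * k + 1) : ℝ) * (((n + k + 1) / (2 * k + 1) : ℕ) : ℝ) with hg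
  have hsum_g : ∑ k ∈ Finset.range (n + 1), g k = 1 := by
    have h := aux_key n
    have h' : ((∑ k ∈ Finset.range (n + 1),
        (μ (2 * k + 1) : ℤ) * ((n + k + 1) / (2 * k + 1) : ℕ) : ℤ) : ℝ) = 1 := by
      rw [h]; norm_num
    rw [← h']
    push_cast
    rfl
  have hbound : ∀ k, |f k - g k| ≤ 1 := by
    intro k
    have hD : (0 : ℝ) < 2 * (k : ℝ) + 1 := by positivity
    have h1 : (((n + k + 1) / (2 * k + 1) : ℕ) : ℝ) ≤ ((n + k + 1 : ℕ) : ℝ) / ((2 * k + 1 : ℕ) : ℝ) :=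
      Nat.cast_div_le
    have h3 : n + k + 1 < ((n + k + 1) / (2 * k + 1) + 1) * (2 * k + 1) := by
      have hdm := Nat.div_add_mod (n + k + 1) (2 * k + 1)
      have hml := Nat.mod_lt (n + k + 1) (show 0 < 2 * k + 1 by omega)
      nlinarith
    have h2 : ((n + k + 1 : ℕ) : ℝ) / ((2 * k + 1 : ℕ) : ℝ)
        ≤ (((n + k + 1) / (2 * k + 1) : ℕ) : ℝ) + 1 := by
      rw [div_le_iff₀ (by push_cast; linarith)]
      calc ((n + k + 1 : ℕ) : ℝ)
          ≤ ((((n + k + 1) / (2 * k + 1) + 1) * (2 * k + 1) : ℕ) : ℝ) := by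
            exact_mod_cast h3.le
        _ = ((((n + k + 1) / (2 * k + 1) : ℕ) : ℝ) + 1) * ((2 * k + 1 : ℕ) : ℝ) := by
            push_cast; ring
    have hmu : |(μ (2 * k + 1) : ℝ)| ≤ 1 := by
      have := ArithmeticFunction.abs_moebius_le_one (n := 2 * k + 1)
      exact_mod_cast this
    have heq : f k - g k = (μ (2 * k + 1) : ℝ) *
        (((n + k + 1 : ℕ) : ℝ) / ((2 * k + 1 : ℕ) : ℝ) - (((n + k + 1) / (2 * k + 1) : ℕ) : ℝ)) := by
      rw [hf, hg]
      push_cast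
      ring
    rw [heq, abs_mul]
    have habs : |((n + k + 1 : ℕ) : ℝ) / ((2 * k + 1 : ℕ) : ℝ)
        - (((n + k + 1) / (2 * k + 1) : ℕ) : ℝ)| ≤ 1 :=
      abs_le.mpr ⟨by linarith, by linarith⟩
    calc |(μ (2 * k + 1) : ℝ)| * _ ≤ 1 * 1 :=
          mul_le_mul hmu habs (abs_nonneg _) (by norm_num)
      _ = 1 := by norm_num
  have hzero0 : f 0 - g 0 = 0 := by
    simp [hf, hg, Nat.div_one]
  have hzeroN : f n - g n = 0 := by
    have hq : (n + n + 1) / (2 * n + 1) = 1 := by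
      rw [show n + n + 1 = 2 * n + 1 by ring, Nat.div_self (by omega)]
    rw [hf, hg]
    simp only [hq]
    have hD : (2 * (n : ℝ) + 1) ≠ 0 := by positivity
    field_simp
    ring
  have hpeel : ∀ (F : ℕ → ℝ), ∑ k ∈ Finset.range (n + 1), F k
      = F 0 + (∑ j ∈ Finset.range (n - 1), F (j + 1)) + F n := by
    intro F
    obtain ⟨m, rfl⟩ : ∃ m, n = m + 1 := ⟨n - 1, by omega⟩
    rw [Finset.sum_range_succ, Finset.sum_range_succ']
    simp only [Nat.add_sub_cancel]
    ring
  have hE : |(∑ k ∈ Finset.range (n + 1), f k) - (∑ k ∈ Finset.range (n + 1), g k)|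
      ≤ (n : ℝ) - 1 := by
    rw [← Finset.sum_sub_distrib, hpeel (fun k => f k - g k), hzero0, hzeroN,
      zero_add, add_zero]
    calc |∑ j ∈ Finset.range (n - 1), (f (j + 1) - g (j + 1))|
        ≤ ∑ j ∈ Finset.range (n - 1), |f (j + 1) - g (j + 1)| :=
          Finset.abs_sum_le_sum_abs _ _
      _ ≤ ∑ _j ∈ Finset.range (n - 1), (1 : ℝ) :=
          Finset.sum_le_sum (fun j _ => hbound (j + 1))
      _ = ((n - 1 : ℕ) : ℝ) := by simp
      _ ≤ (n : ℝ) - 1 := by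
          rw [Nat.cast_sub hn]; norm_num
  obtain ⟨hlo, hhi⟩ := abs_le.mp hE
  constructor <;> linarith [hsum_g]
end

section
/- Assuming Σ_{n=1}^{∞} μ(n)/n = 0, the series Σ_{n=0}^{∞} μ(2n+1)/(2n+1) converges to 0, and consequently Σ_{n=2}^{∞} (−μ(2n+1))/(2n+1) = 2/3. -/
open ArithmeticFunction ArithmeticFunction.Moebius Finset Filter

noncomputable def Taux (N : ℕ) : ℝ := ∑ n ∈ range N, (μ (2*n+1) : ℝ) / (2*n+1)
noncomputable def Saux (N : ℕ) : ℝ := ∑ n ∈ Finset.Icc 1 N, (μ n : ℝ) / n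

lemma mu_two_mul_odd (m : ℕ) (hm : Odd m) : (μ (2*m) : ℤ) = - μ m := by
  rw [isMultiplicative_moebius.map_mul_of_coprime (Nat.coprime_two_left.mpr hm),
    moebius_apply_prime Nat.prime_two]; ring

lemma mu_two_mul_even (m : ℕ) (hm : Even m) : (μ (2*m) : ℤ) = 0 := by
  apply moebius_eq_zero_of_not_squarefree
  intro hs
  have := hs 2 ?_
  · norm_num at this
  · obtain ⟨k, rfl⟩ := hm; exact ⟨k, by ring⟩

lemma key (N : ℕ) : Saux (2*N) = Taux N - Taux ((N+1)/2) / 2 := by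
  induction N with
  | zero => simp [Saux, Taux]
  | succ N ih =>
    have h1 : 2 * (N+1) = (2*N+1) + 1 := by ring
    have e1 : Saux (2*(N+1)) = Saux (2*N) + (μ (2*N+1) : ℝ)/(2*N+1) + (μ (2*(N+1)) : ℝ)/(2*(N+1)) := by
      rw [Saux, Saux, h1, Finset.sum_Icc_succ_top (by omega), Finset.sum_Icc_succ_top (by omega)]
      push_cast; ring
    have e2 : Taux (N+1) = Taux N + (μ (2*N+1) : ℝ)/(2*N+1) := by
      rw [Taux, Taux, Finset.sum_range_succ]
    rcases Nat.even_or_odd N with he | ho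
    · obtain ⟨k, rfl⟩ := he
      have e3 : Taux (k+1) = Taux k + (μ (2*k+1) : ℝ)/(2*k+1) := by
        rw [Taux, Taux, Finset.sum_range_succ]
      have hmu2 : (μ (2*((k+k)+1)) : ℝ) = - (μ (2*k+1) : ℝ) := by
        rw [show (k+k)+1 = 2*k+1 by ring, mu_two_mul_odd (2*k+1) ⟨k, by omega⟩]
        push_cast; ring
      rw [e1, ih, e2]
      rw [show (k+k+1+1)/2 = k+1 by omega, show (k+k+1)/2 = k by omega]
      rw [e3, hmu2]
      push_cast
      have : ((2:ℝ)*(k+k+1)) = 2*(2*k+1) := by push_cast; ring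
      rw [this]
      have hne : ((2:ℝ)*k+1) ≠ 0 := by positivity
      field_simp
      ring
    · obtain ⟨k, rfl⟩ := ho
      have hmu2 : (μ (2*((2*k+1)+1)) : ℝ) = 0 := by
        rw [show (2*k+1)+1 = 2*(k+1) by ring]
        have := mu_two_mul_even (2*(k+1)) ⟨k+1, by ring⟩
        exact_mod_cast this
      rw [e1, ih, e2, hmu2]
      rw [show (2*k+1+1)/2 = k+1 by omega, show (2*k+1+1+1)/2 = k+1 by omega]
      ring

lemma Trec (N : ℕ) : Taux N = Saux (2*N) + Taux ((N+1)/2) / 2 := by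
  have := key N; linarith

lemma Tbound (C : ℝ) (hC : ∀ M, |Saux M| ≤ C) : ∀ N, |Taux N| ≤ 2*C := by
  have hC0 : 0 ≤ C := (abs_nonneg _).trans (hC 0)
  intro N
  induction N using Nat.strong_induction_on with
  | _ N ih =>
    match N with
    | 0 => simp [Taux]; positivity
    | 1 =>
      have hk := Trec 1
      norm_num at hk
      have : Taux 1 = 2 * Saux 2 := by linarith
      rw [this, abs_mul, abs_two]
      have := hC 2
      nlinarith [abs_nonneg (Saux 2)]
    | (N+2) =>
      have hk := Trec (N+2)
      have hlt : (N+2+1)/2 < N+2 := by omega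
      have hih := ih ((N+2+1)/2) hlt
      have h1 := hC (2*(N+2))
      calc |Taux (N+2)| ≤ |Saux (2*(N+2))| + |Taux ((N+2+1)/2) / 2| := by
            rw [hk]; exact abs_add_le _ _
        _ ≤ C + (2*C)/2 := by
            rw [abs_div, abs_two]
            exact add_le_add h1 (by linarith)
        _ = 2*C := by ring

lemma Ttendsto (h : Tendsto Saux atTop (nhds 0)) : Tendsto Taux atTop (nhds 0) := by
  obtain ⟨C, hC⟩ := (Metric.isBounded_range_of_tendsto Saux h).subset_ball 0
  have hCb : ∀ M, |Saux M| ≤ max C 0 := by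
    intro M
    have := hC (Set.mem_range_self M)
    simp [Metric.mem_ball, Real.dist_eq] at this
    exact this.le.trans (le_max_left _ _)
  set C' := max C 0 with hC'
  have hC'0 : (0:ℝ) ≤ C' := le_max_right _ _
  have hbd := Tbound C' hCb
  rw [NormedAddCommGroup.tendsto_nhds_zero] at h ⊢
  intro ε hε
  have half : ∀ᶠ N in atTop, |Saux (2*N)| < ε/4 := by
    have ht : Tendsto (fun N : ℕ => 2*N) atTop atTop :=
      tendsto_atTop.mpr fun b => eventually_atTop.mpr ⟨b, fun n hn => by omega⟩
    exact ht.eventually (h (ε/4) (by linarith))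
  have hhalf : Tendsto (fun N : ℕ => (N+1)/2) atTop atTop :=
    tendsto_atTop.mpr fun b => eventually_atTop.mpr ⟨2*b, fun n hn => by omega⟩
  have main : ∀ k : ℕ, ∀ᶠ N in atTop, |Taux N| ≤ 2*C'/2^k + ε/2 := by
    intro k
    induction k with
    | zero =>
      filter_upwards with N
      have := hbd N
      simp only [pow_zero]
      linarith
    | succ k ihk =>
      have h2 : ∀ᶠ N in atTop, |Taux ((N+1)/2)| ≤ 2*C'/2^k + ε/2 := hhalf.eventually ihk
      filter_upwards [half, h2] with N hA hB
      have hrec := Trec N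
      have heq : 2*C'/2^(k+1) = C'/2^k := by rw [pow_succ]; ring
      calc |Taux N| ≤ |Saux (2*N)| + |Taux ((N+1)/2) / 2| := by rw [hrec]; exact abs_add_le _ _
        _ ≤ ε/4 + (2*C'/2^k + ε/2)/2 := by
            rw [abs_div, abs_two]; exact add_le_add hA.le (by linarith)
        _ = 2*C'/2^(k+1) + ε/2 := by rw [heq]; ring
  obtain ⟨k, hk⟩ := pow_unbounded_of_one_lt (y := (2:ℝ)) ((2*C')/(ε/4)) one_lt_two
  have hpow : (0:ℝ) < 2^k := by positivity
  have hsmall : 2*C'/2^k < ε/4 := by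
    rw [div_lt_iff₀ hpow]
    calc 2*C' = (2*C')/(ε/4) * (ε/4) := by field_simp
      _ < 2^k * (ε/4) := by
          apply mul_lt_mul_of_pos_right hk (by linarith)
      _ = ε/4 * 2^k := by ring
  filter_upwards [main k] with N hN
  calc ‖Taux N‖ = |Taux N| := rfl
    _ ≤ 2*C'/2^k + ε/2 := hN
    _ < ε/4 + ε/2 := by linarith
    _ < ε := by linarith

lemma tail_eq : ∀ N, 1 ≤ N →
    ∑ n ∈ Finset.Icc 2 N, (-(μ (2 * n + 1)) : ℝ) / (2 * n + 1) = 2/3 - Taux (N+1) := by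
  intro N hN
  induction N, hN using Nat.le_induction with
  | base =>
    have : Taux 2 = 2/3 := by
      simp [Taux, Finset.sum_range_succ, moebius_apply_one,
        moebius_apply_prime (by norm_num : Nat.Prime 3)]
      norm_num
    simp [this]
  | succ N hN ih =>
    rw [Finset.sum_Icc_succ_top (by omega), ih]
    have : Taux (N+1+1) = Taux (N+1) + (μ (2*(N+1)+1) : ℝ)/(2*(N+1)+1) := by
      rw [Taux, Taux, Finset.sum_range_succ]; norm_cast
    rw [this]
    push_cast
    ring

open ArithmeticFunction ArithmeticFunction.Moebius in
theorem stmt_17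
    (h : Filter.Tendsto (fun N : ℕ => ∑ n ∈ Finset.Icc 1 N, (μ n : ℝ) / n)
      Filter.atTop (nhds 0)) :
    Filter.Tendsto (fun N : ℕ => ∑ n ∈ Finset.range N, (μ (2 * n + 1) : ℝ) / (2 * n + 1))
      Filter.atTop (nhds 0) ∧
    Filter.Tendsto (fun N : ℕ => ∑ n ∈ Finset.Icc 2 N, (-(μ (2 * n + 1)) : ℝ) / (2 * n + 1))
      Filter.atTop (nhds (2 / 3)) := by
  have hS : Tendsto Saux atTop (nhds 0) := h
  have hT : Tendsto Taux atTop (nhds 0) := Ttendsto hS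
  constructor
  · exact hT
  · have hT1 : Tendsto (fun N : ℕ => 2/3 - Taux (N+1)) atTop (nhds (2/3)) := by
      have := (hT.comp (tendsto_add_atTop_nat 1)).const_sub (2/3 : ℝ)
      simpa using this
    apply hT1.congr'
    filter_upwards [eventually_ge_atTop 1] with N hN
    exact (tail_eq N hN).symm
end
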